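/- For all positive real numbers λ, γ, κ, ρ, φ, the quantity ν₃² := (c₁ + c₂)/2 satisfies ν₃² > ρ², where c₁ = (λρ² + ρκγ + φ)/λ and c₂ = √((λρ² + ρκγ + φ − 2φ)² + 4φρκγ)/λ. -/

import Mathlib

theorem stmt_2 (l γ κ ρ φ : ℝ) (hl : 0 < l) (hγ : 0 < γ) (hκ : 0 < κ) (hρ : 0 < ρ)
    (hφ : 0 < φ)
    (c₁ c₂ : ℝ) (hc₁ : c₁ = (l * ρ ^ 2 + ρ * κ * γ + φ) / l)
    (hc₂ : c₂ = Real.sqrt ((l * ρ ^ 2 + ρ * κ * γ + φ - 2 * φ) ^ 2 + 4 * φ * ρ * κ * γ) / l) :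
    (c₁ + c₂) / 2 > ρ ^ 2 := by
  subst hc₁ hc₂
  set A := l * ρ ^ 2 + ρ * κ * γ + φ - 2 * φ with hA
  set S := Real.sqrt (A ^ 2 + 4 * φ * ρ * κ * γ) with hS
  have hB : 0 < 4 * φ * ρ * κ * γ := by positivity
  have hs : |A| < S := by
    rw [hS, ← Real.sqrt_sq_eq_abs]
    exact Real.sqrt_lt_sqrt (by positivity) (by linarith)
  have key : 2 * (l * ρ ^ 2) < (l * ρ ^ 2 + ρ * κ * γ + φ) + S := by
    rcases abs_cases A with ⟨h1, h2⟩ | ⟨h1, h2⟩ <;>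
      nlinarith [mul_pos hρ (mul_pos hκ hγ), hs]
  have heq : ((l * ρ ^ 2 + ρ * κ * γ + φ) / l + S / l) / 2
      = ((l * ρ ^ 2 + ρ * κ * γ + φ) + S) / (l * 2) := by
    rw [← add_div, div_div]
  rw [gt_iff_lt, heq, lt_div_iff₀ (by positivity)]
  nlinarith [key]
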